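/- Let R be a finite ring with unity, let χ be an additive character of R, let x ∈ R, and let K be the largest left ideal of R contained in (x)_ℓ ∩ {y ∈ R : χ(y) = 1}. If M_R((x)_ℓ) is a minimal subset of itself (i.e., no proper subset E ⊊ M_R((x)_ℓ) satisfies ⋂_{M∈E} M = ⋂_{M∈M_R((x)_ℓ)} M), then φ_R(K,(x)_ℓ) · C_χ(x) = μ_R(K,(x)_ℓ) · |[x]_ℓ|; equivalently, C_χ(x) = μ_R(K,(x)_ℓ) · |[x]_ℓ| / φ_R(K,(x)_ℓ). -/

import Mathlib

open scoped BigOperators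
open Classical

variable {R : Type*}

/-- The left ideal of `R` generated by `x`, i.e. `(x)_ℓ`. -/
def lgen [Ring R] (x : R) : Submodule R R := Submodule.span R {x}

/-- `[x]_ℓ = {y : (y)_ℓ = (x)_ℓ}`. -/
def classL [Ring R] (x : R) : Set R := {y | lgen y = lgen x}

/-- The character sum `C_χ(x) = ∑_{s ∈ [x]_ℓ} χ(s)`. -/
noncomputable def CchiL [Ring R] (χ : AddChar R ℂ) (x : R) : ℂ :=
  ∑ᶠ s ∈ classL x, χ s

/-- The set `M_R(J)` of maximal `R`-left ideals of `J`. -/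
def maxROf [Ring R] (J : Submodule R R) : Set (Submodule R R) :=
  {M | M < J ∧ ∀ I' : Submodule R R, M < I' → ¬ I' < J}

/-- The set `M_R(J, K)` of maximal `R`-left ideals of `J` containing `K`. -/
def maxROfAbove [Ring R] (J K : Submodule R R) : Set (Submodule R R) :=
  {M | M ∈ maxROf J ∧ K ≤ M}

/-- Intersection of the family `E` of left ideals, with the convention that the
empty intersection is `J`. -/
noncomputable def interIn [Ring R] (J : Submodule R R) (E : Set (Submodule R R)) :
    Submodule R R :=
  if E = ∅ then J else sInf E

/-- The Möbius function `μ_R(I, J)` on left ideals of `R`. -/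
noncomputable def muR [Ring R] (I J : Submodule R R) : ℤ :=
  if I = J then 1
  else if I < J ∧ ∃ E : Set (Submodule R R),
      E ⊆ maxROf J ∧ E.Nonempty ∧ interIn J E = I then
    (Nat.card {E : Set (Submodule R R) //
        E ⊆ maxROf J ∧ interIn J E = I ∧ Even (Nat.card E)} : ℤ)
      - (Nat.card {E : Set (Submodule R R) //
        E ⊆ maxROf J ∧ interIn J E = I ∧ Odd (Nat.card E)} : ℤ)
  else 0

/-- The function `φ_R(I, J)` on left ideals of `R`. -/
noncomputable def phiR [Ring R] (I J : Submodule R R) : ℂ :=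
  if I = J then 1
  else if I < J ∧ ∃ E : Set (Submodule R R),
      E ⊆ maxROf J ∧ E.Nonempty ∧ interIn J E = I then
    ∏ᶠ M ∈ maxROfAbove J I, ((Nat.card J : ℂ) / (Nat.card M : ℂ) - 1)
  else 1


set_option linter.unusedSectionVars false
set_option linter.unusedVariables false
set_option maxHeartbeats 1000000
section MyAux

variable [Ring R]

theorem myInterIn_le {J : Submodule R R} {E : Set (Submodule R R)}
    (hE : ∀ M ∈ E, M ≤ J) : interIn J E ≤ J := by
  unfold interIn
  split_ifs with h
  · exact le_rfl
  · obtain ⟨M, hM⟩ := Set.nonempty_iff_ne_empty.mpr h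
    exact le_trans (sInf_le hM) (hE M hM)

theorem myLe_interIn {J L : Submodule R R} {E : Set (Submodule R R)}
    (hJ : L ≤ J) (h : ∀ M ∈ E, L ≤ M) : L ≤ interIn J E := by
  unfold interIn
  split_ifs with h0
  · exact hJ
  · exact le_sInf h

theorem myInterIn_le_of_mem {J : Submodule R R} {E : Set (Submodule R R)} {M : Submodule R R}
    (hM : M ∈ E) : interIn J E ≤ M := by
  unfold interIn
  split_ifs with h0
  · rw [h0] at hM; exact absurd hM (Set.notMem_empty M)
  · exact sInf_le hM

theorem myInterIn_empty (J : Submodule R R) : interIn J (∅ : Set (Submodule R R)) = J :=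
  if_pos rfl

theorem myInterIn_singleton {J M : Submodule R R} (h : M ≤ J) :
    interIn J ({M} : Set (Submodule R R)) = M := by
  unfold interIn
  rw [if_neg (Set.singleton_ne_empty M), sInf_singleton]

theorem myInterIn_anti {J : Submodule R R} {E1 E2 : Set (Submodule R R)}
    (hJ : ∀ M ∈ E1, M ≤ J) (h : E2 ⊆ E1) : interIn J E1 ≤ interIn J E2 :=
  myLe_interIn (myInterIn_le hJ) (fun _ hM => myInterIn_le_of_mem (h hM))

theorem myInterIn_union {J : Submodule R R} {E1 E2 : Set (Submodule R R)}
    (h1 : ∀ M ∈ E1, M ≤ J) (h2 : ∀ M ∈ E2, M ≤ J) :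
    interIn J (E1 ∪ E2) = interIn J E1 ⊓ interIn J E2 := by
  refine le_antisymm (le_inf (myInterIn_anti ?_ Set.subset_union_left)
    (myInterIn_anti ?_ Set.subset_union_right)) ?_
  · intro M hM; rcases hM with h | h; exact h1 M h; exact h2 M h
  · intro M hM; rcases hM with h | h; exact h1 M h; exact h2 M h
  · refine myLe_interIn (inf_le_left.trans (myInterIn_le h1)) ?_
    rintro M (hM | hM)
    · exact inf_le_left.trans (myInterIn_le_of_mem hM)
    · exact inf_le_right.trans (myInterIn_le_of_mem hM)

theorem myMem_interIn {J : Submodule R R} {E : Set (Submodule R R)}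
    (hE : ∀ M ∈ E, M ≤ J) {s : R} :
    s ∈ interIn J E ↔ s ∈ J ∧ ∀ M ∈ E, s ∈ M := by
  constructor
  · intro h
    exact ⟨myInterIn_le hE h, fun M hM => myInterIn_le_of_mem hM h⟩
  · rintro ⟨hsJ, h⟩
    unfold interIn
    split_ifs with h0
    · exact hsJ
    · exact Submodule.mem_sInf.mpr h

variable [Fintype R]

instance myFiniteSubmodule : Finite (Submodule R R) :=
  Finite.of_injective (fun p => (p : Set R)) SetLike.coe_injective

theorem myExists_max {J L : Submodule R R} (h : L < J) : ∃ M ∈ maxROf J, L ≤ M := by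
  have hfin : Set.Finite {I : Submodule R R | L ≤ I ∧ I < J} := Set.toFinite _
  obtain ⟨M, hM, hmax⟩ := Set.Finite.exists_maximal hfin ⟨L, le_rfl, h⟩
  refine ⟨M, ⟨hM.2, fun I' hI' hI'J => hI'.ne ?_⟩, hM.1⟩
  exact le_antisymm hI'.le (hmax ⟨hM.1.trans hI'.le, hI'J⟩ hI'.le)

theorem myMem_classL {x y : R} :
    y ∈ classL x ↔ y ∈ lgen x ∧ ∀ M ∈ maxROf (lgen x), y ∉ M := by
  constructor
  · intro h
    have h' : lgen y = lgen x := h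
    have hy : y ∈ lgen y := Submodule.mem_span_singleton_self y
    refine ⟨h' ▸ hy, fun M hM hyM => ?_⟩
    have h2 : lgen y ≤ M := (Submodule.span_singleton_le_iff_mem y M).mpr hyM
    rw [h'] at h2
    exact (show M < lgen x from hM.1).not_ge h2
  · rintro ⟨hy, hnot⟩
    have hle : lgen y ≤ lgen x := (Submodule.span_singleton_le_iff_mem _ _).mpr hy
    rcases eq_or_lt_of_le hle with he | hlt
    · exact he
    · obtain ⟨M, hM, hLM⟩ := myExists_max hlt
      exact absurd (hLM (Submodule.mem_span_singleton_self y)) (hnot M hM)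

end MyAux

section MyAux2

variable [Ring R] [Fintype R]

theorem myMaxROf_le {J M : Submodule R R} (hM : M ∈ maxROf J) : M ≤ J := hM.1.le

theorem myMaxROf_covBy {J M : Submodule R R} (hM : M ∈ maxROf J) : M ⋖ J :=
  ⟨hM.1, fun _ h1 h2 => hM.2 _ h1 h2⟩

theorem myInterIn_le_iff {J : Submodule R R}
    (hmin : ∀ E : Set (Submodule R R), E ⊂ maxROf J →
      interIn J E ≠ interIn J (maxROf J))
    {E1 E2 : Set (Submodule R R)} (h1 : E1 ⊆ maxROf J) (h2 : E2 ⊆ maxROf J) :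
    interIn J E1 ≤ interIn J E2 ↔ E2 ⊆ E1 := by
  have hT : ∀ M ∈ maxROf J, M ≤ J := fun M hM => hM.1.le
  refine ⟨fun h M hM => ?_, fun h => myInterIn_anti (fun M hME => hT M (h1 hME)) h⟩
  by_contra hME1
  set T := maxROf J with hTdef
  set E' := E1 ∪ (T \ (E1 ∪ E2)) with hE'
  have hE'T : E' ⊆ T := Set.union_subset h1 Set.diff_subset
  have hne : M ∉ E' := by
    intro hmem
    rcases hmem with hmem | hmem
    · exact hME1 hmem
    · exact hmem.2 (Or.inr hM)
  have hss : E' ⊂ T := (Set.ssubset_iff_of_subset hE'T).mpr ⟨M, h2 hM, hne⟩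
  apply hmin E' hss
  have hUT : E1 ∪ E2 ∪ (T \ (E1 ∪ E2)) = T := Set.union_diff_cancel (Set.union_subset h1 h2)
  have k1 : ∀ M' ∈ E1, M' ≤ J := fun M' hM' => hT M' (h1 hM')
  have k2 : ∀ M' ∈ E2, M' ≤ J := fun M' hM' => hT M' (h2 hM')
  have k3 : ∀ M' ∈ T \ (E1 ∪ E2), M' ≤ J := fun M' hM' => hT M' hM'.1
  have k12 : ∀ M' ∈ E1 ∪ E2, M' ≤ J := by
    rintro M' (hM' | hM'); exacts [k1 M' hM', k2 M' hM']
  calc interIn J E' = interIn J E1 ⊓ interIn J (T \ (E1 ∪ E2)) := myInterIn_union k1 k3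
    _ = (interIn J E1 ⊓ interIn J E2) ⊓ interIn J (T \ (E1 ∪ E2)) := by
        rw [inf_eq_left.mpr h]
    _ = interIn J (E1 ∪ E2) ⊓ interIn J (T \ (E1 ∪ E2)) := by rw [myInterIn_union k1 k2]
    _ = interIn J (E1 ∪ E2 ∪ (T \ (E1 ∪ E2))) := (myInterIn_union k12 k3).symm
    _ = interIn J T := by rw [hUT]

theorem myMem_of_interIn_le {J : Submodule R R}
    (hmin : ∀ E : Set (Submodule R R), E ⊂ maxROf J →
      interIn J E ≠ interIn J (maxROf J))
    {E : Set (Submodule R R)} {M : Submodule R R} (hE : E ⊆ maxROf J) (hM : M ∈ maxROf J)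
    (h : interIn J E ≤ M) : M ∈ E := by
  have h2 : interIn J E ≤ interIn J ({M} : Set (Submodule R R)) := by
    rw [myInterIn_singleton hM.1.le]; exact h
  exact (myInterIn_le_iff hmin hE (Set.singleton_subset_iff.mpr hM)).mp h2 rfl

theorem myInterIn_sup {J : Submodule R R}
    (hmin : ∀ E : Set (Submodule R R), E ⊂ maxROf J →
      interIn J E ≠ interIn J (maxROf J))
    {E : Set (Submodule R R)} {M : Submodule R R} (hE : E ⊆ maxROf J) (hM : M ∈ maxROf J)
    (hMe : M ∉ E) : interIn J E ⊔ M = J := by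
  have hT : ∀ M' ∈ E, M' ≤ J := fun M' hM' => (hE hM').1.le
  have hle : interIn J E ⊔ M ≤ J := sup_le (myInterIn_le hT) hM.1.le
  have hlt : M < interIn J E ⊔ M := by
    rcases (le_sup_right : M ≤ interIn J E ⊔ M).lt_or_eq with hlt | heq
    · exact hlt
    · exact absurd (myMem_of_interIn_le hmin hE hM (le_sup_left.trans heq.ge)) hMe
  exact ((sup_le (le_sup_left.trans hle) hM.1.le).lt_or_eq).resolve_left (hM.2 _ hlt)

theorem myCard_inf_mul_card_sup (A B : Submodule R R) :
    Nat.card (A ⊓ B : Submodule R R) * Nat.card (A ⊔ B : Submodule R R)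
      = Nat.card A * Nat.card B := by
  have e1 := Submodule.card_eq_card_quotient_mul_card
    (Submodule.comap A.subtype (A ⊓ B))
  have e2 := Submodule.card_eq_card_quotient_mul_card
    (Submodule.comap (A ⊔ B).subtype B)
  have c1 : Nat.card (Submodule.comap A.subtype (A ⊓ B)) = Nat.card (A ⊓ B : Submodule R R) :=
    Nat.card_congr (Submodule.comapSubtypeEquivOfLe inf_le_left).toEquiv
  have c2 : Nat.card (Submodule.comap (A ⊔ B).subtype B) = Nat.card B :=
    Nat.card_congr (Submodule.comapSubtypeEquivOfLe le_sup_right).toEquiv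
  have c3 : Nat.card (↥A ⧸ Submodule.comap A.subtype (A ⊓ B))
      = Nat.card (↥(A ⊔ B) ⧸ Submodule.comap (A ⊔ B).subtype B) :=
    Nat.card_congr (LinearMap.quotientInfEquivSupQuotient A B).toEquiv
  rw [c1, c3] at e1
  rw [c2] at e2
  rw [e1, e2]
  ring

end MyAux2

section MyAux3

variable [Ring R] [Fintype R]

theorem mySum_shift (χ : AddChar R ℂ) {S : Finset R} {t : R}
    (hS : ∀ s ∈ S, s + t ∈ S) (ht : χ t ≠ 1) : ∑ s ∈ S, χ s = 0 := by
  classical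
  have hinj : Function.Injective (fun s : R => s + t) := fun a b h => by simpa using h
  have himg : S.image (fun s => s + t) = S := by
    apply Finset.eq_of_subset_of_card_le
    · intro y hy
      obtain ⟨a, ha, rfl⟩ := Finset.mem_image.mp hy
      exact hS a ha
    · rw [Finset.card_image_of_injective _ hinj]
  have h1 : ∑ s ∈ S, χ (s + t) = ∑ s ∈ S, χ s := by
    conv_rhs => rw [← himg]
    rw [Finset.sum_image (fun a _ b _ h => hinj h)]
  simp_rw [AddChar.map_add_eq_mul, ← Finset.sum_mul] at h1
  have h2 : (∑ s ∈ S, χ s) * (χ t - 1) = 0 := by rw [mul_sub, h1, mul_one, sub_self]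
  exact (mul_eq_zero.mp h2).resolve_right (sub_ne_zero.mpr ht)

theorem myCard_submodule (L : Submodule R R) :
    Nat.card L = (L : Set R).toFinite.toFinset.card := by
  rw [← SetLike.coe_sort_coe, Nat.card_coe_set_eq,
    Set.ncard_eq_toFinset_card _ (L : Set R).toFinite]

theorem mySum_submodule (χ : AddChar R ℂ) (L : Submodule R R) :
    ∑ s ∈ (L : Set R).toFinite.toFinset, χ s =
      if (L : Set R) ⊆ {y | χ y = 1} then (Nat.card L : ℂ) else 0 := by
  split_ifs with h
  · have h1 : ∀ s ∈ (L : Set R).toFinite.toFinset, χ s = 1 :=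
      fun s hs => h ((Set.Finite.mem_toFinset _).mp hs)
    rw [Finset.sum_congr rfl h1, Finset.sum_const, myCard_submodule, nsmul_eq_mul, mul_one]
  · have h' : ∃ t ∈ (L : Set R), χ t ≠ 1 := by
      by_contra hc
      push_neg at hc
      exact h (fun y hy => hc y hy)
    obtain ⟨t, htL, htχ⟩ := h'
    refine mySum_shift χ (fun s hs => ?_) htχ
    rw [Set.Finite.mem_toFinset] at hs ⊢
    exact L.add_mem hs htL

theorem mySum_powerset_neg_one (d : Finset (Submodule R R)) :
    ∑ e ∈ d.powerset, (-1 : ℂ) ^ e.card = if d = ∅ then 1 else 0 := by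
  classical
  have h := Finset.prod_add (fun _ : Submodule R R => (-1 : ℂ)) (fun _ => 1) d
  simp only [Finset.prod_const, one_pow, mul_one, neg_add_cancel] at h
  rw [← h]
  by_cases hd : d = ∅
  · simp [hd]
  · rw [if_neg hd, zero_pow]
    exact Finset.card_ne_zero.mpr (Finset.nonempty_iff_ne_empty.mpr hd)

theorem myIE (x : R) (f : R → ℂ) :
    ∑ e ∈ (maxROf (lgen x)).toFinite.toFinset.powerset,
      ((-1 : ℂ) ^ e.card *
        ∑ s ∈ (interIn (lgen x) (↑e : Set (Submodule R R)) : Set R).toFinite.toFinset, f s)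
      = ∑ s ∈ (classL x).toFinite.toFinset, f s := by
  classical
  set J := lgen x with hJ
  set tT := (maxROf J).toFinite.toFinset with htT
  have htTsub : ∀ e : Finset (Submodule R R), e ∈ tT.powerset → ∀ M ∈ e, M ∈ maxROf J :=
    fun e he M hM => (Set.Finite.mem_toFinset _).mp (Finset.mem_powerset.mp he hM)
  have hstep : ∀ e ∈ tT.powerset,
      (-1:ℂ) ^ e.card *
        ∑ s ∈ (interIn J (↑e : Set (Submodule R R)) : Set R).toFinite.toFinset, f s
      = ∑ s ∈ (J : Set R).toFinite.toFinset,
          (if ∀ M ∈ e, s ∈ M then (-1:ℂ) ^ e.card * f s else 0) := by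
    intro e he
    have hle : ∀ M ∈ (↑e : Set (Submodule R R)), M ≤ J := fun M hM =>
      (htTsub e he M hM).1.le
    have hfin : (interIn J (↑e : Set (Submodule R R)) : Set R).toFinite.toFinset
        = (J : Set R).toFinite.toFinset.filter (fun s => ∀ M ∈ e, s ∈ M) := by
      ext s
      simp only [Set.Finite.mem_toFinset, Finset.mem_filter, SetLike.mem_coe]
      rw [myMem_interIn hle]
      simp
    rw [hfin, Finset.sum_filter, Finset.mul_sum]
    refine Finset.sum_congr rfl (fun s _ => ?_)
    rw [mul_ite, mul_zero]
  rw [Finset.sum_congr rfl hstep, Finset.sum_comm]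
  have hinner : ∀ s ∈ (J : Set R).toFinite.toFinset,
      (∑ e ∈ tT.powerset, if ∀ M ∈ e, s ∈ M then (-1:ℂ) ^ e.card * f s else 0)
      = (if ∀ M ∈ tT, s ∉ M then f s else 0) := by
    intro s _
    set d := tT.filter (fun M => s ∈ M) with hd
    have hcond : ∀ e ∈ tT.powerset, (∀ M ∈ e, s ∈ M) ↔ e ⊆ d := by
      intro e he
      constructor
      · intro h M hM
        exact Finset.mem_filter.mpr ⟨Finset.mem_powerset.mp he hM, h M hM⟩
      · intro h M hM
        exact (Finset.mem_filter.mp (h hM)).2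
    rw [Finset.sum_congr rfl (fun e he => if_congr (hcond e he) rfl rfl)]
    rw [← Finset.sum_subset (Finset.powerset_mono.mpr (Finset.filter_subset _ _))
      (fun e _ hne => if_neg (fun hsub => hne (Finset.mem_powerset.mpr hsub)))]
    rw [Finset.sum_congr rfl (fun e he => if_pos (Finset.mem_powerset.mp he))]
    rw [← Finset.sum_mul, mySum_powerset_neg_one]
    have hiff : d = ∅ ↔ ∀ M ∈ tT, s ∉ M := by
      rw [hd, Finset.filter_eq_empty_iff]
    by_cases hc : ∀ M ∈ tT, s ∉ M
    · rw [if_pos hc, if_pos (hiff.mpr hc), one_mul]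
    · rw [if_neg hc, if_neg (fun h => hc (hiff.mp h)), zero_mul]
  rw [Finset.sum_congr rfl hinner, ← Finset.sum_filter]
  apply Finset.sum_congr _ (fun s _ => rfl)
  ext s
  simp only [Finset.mem_filter, Set.Finite.mem_toFinset, SetLike.mem_coe]
  rw [myMem_classL]
  constructor
  · rintro ⟨h1, h2⟩
    exact ⟨h1, fun M hM => h2 M ((Set.Finite.mem_toFinset _).mpr hM)⟩
  · rintro ⟨h1, h2⟩
    exact ⟨h1, fun M hM => h2 M ((Set.Finite.mem_toFinset _).mp hM)⟩

end MyAux3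

section MyAux4

variable [Ring R] [Fintype R]

theorem myInterIn_insert {J M : Submodule R R} {E : Set (Submodule R R)}
    (hM : M ≤ J) (hE : ∀ M' ∈ E, M' ≤ J) :
    interIn J (insert M E) = interIn J E ⊓ M := by
  rw [Set.insert_eq,
    myInterIn_union (fun M' hM' => by rw [Set.mem_singleton_iff] at hM'; rw [hM']; exact hM) hE,
    myInterIn_singleton hM, inf_comm]

theorem myCardJ_ne_zero (J : Submodule R R) : (Nat.card J : ℂ) ≠ 0 :=
  Nat.cast_ne_zero.mpr (Nat.card_pos (α := ↥J)).ne'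

theorem myCard_interIn {J : Submodule R R}
    (hmin : ∀ E : Set (Submodule R R), E ⊂ maxROf J →
      interIn J E ≠ interIn J (maxROf J))
    (e : Finset (Submodule R R)) :
    (∀ M ∈ e, M ∈ maxROf J) →
    ((Nat.card (interIn J (↑e : Set (Submodule R R))) : ℂ)
      = (Nat.card J : ℂ) * ∏ M ∈ e, ((Nat.card M : ℂ) / (Nat.card J : ℂ))) := by
  classical
  induction e using Finset.induction_on with
  | empty => intro _; simp [myInterIn_empty]
  | @insert M e hMe ih =>
    intro he
    have hM : M ∈ maxROf J := he M (Finset.mem_insert_self M e)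
    have he' : ∀ M' ∈ e, M' ∈ maxROf J := fun M' h => he M' (Finset.mem_insert_of_mem h)
    have hle : ∀ M' ∈ (↑e : Set (Submodule R R)), M' ≤ J := fun M' h => (he' M' h).1.le
    have h1 : interIn J (↑(insert M e) : Set (Submodule R R)) = interIn J ↑e ⊓ M := by
      rw [Finset.coe_insert]
      exact myInterIn_insert hM.1.le hle
    have h2 : interIn J (↑e : Set (Submodule R R)) ⊔ M = J :=
      myInterIn_sup hmin (fun M' h => he' M' h) hM (by simpa using hMe)
    have h3 := myCard_inf_mul_card_sup (interIn J (↑e : Set (Submodule R R))) M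
    rw [h2] at h3
    have h3' : ((Nat.card (interIn J (↑e : Set (Submodule R R)) ⊓ M : Submodule R R)) : ℂ)
          * (Nat.card J : ℂ)
        = (Nat.card (interIn J (↑e : Set (Submodule R R))) : ℂ) * (Nat.card M : ℂ) := by
      exact_mod_cast congrArg (fun n : ℕ => (n : ℂ)) h3
    have hJ0 := myCardJ_ne_zero J
    have h4 : ((Nat.card (interIn J (↑e : Set (Submodule R R)) ⊓ M : Submodule R R)) : ℂ)
        = (Nat.card (interIn J (↑e : Set (Submodule R R))) : ℂ) * (Nat.card M : ℂ)
          / (Nat.card J : ℂ) := (eq_div_iff (myCardJ_ne_zero J)).mpr h3'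
    rw [h1, h4, ih he', Finset.prod_insert hMe]
    field_simp

theorem mySumform {J : Submodule R R}
    (hmin : ∀ E : Set (Submodule R R), E ⊂ maxROf J →
      interIn J E ≠ interIn J (maxROf J))
    (u : Finset (Submodule R R)) (huT : u ⊆ (maxROf J).toFinite.toFinset) :
    ∑ e ∈ (maxROf J).toFinite.toFinset.powerset,
      (if u ⊆ e then (-1:ℂ) ^ e.card * (Nat.card (interIn J (↑e : Set (Submodule R R))) : ℂ)
        else 0)
    = (-1:ℂ) ^ u.card * (Nat.card J : ℂ)
        * (∏ M ∈ u, ((Nat.card M : ℂ) / (Nat.card J : ℂ)))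
        * ∏ M ∈ (maxROf J).toFinite.toFinset \ u,
            (1 - ((Nat.card M : ℂ) / (Nat.card J : ℂ))) := by
  classical
  set tT := (maxROf J).toFinite.toFinset with htT
  have hmem : ∀ M ∈ tT, M ∈ maxROf J := fun M hM => (Set.Finite.mem_toFinset _).mp hM
  rw [← Finset.sum_filter]
  rw [Finset.sum_nbij' (i := fun e => e \ u) (j := fun f => u ∪ f)
    (t := (tT \ u).powerset)
    (g := fun f => (-1:ℂ) ^ (u ∪ f).card
      * (Nat.card (interIn J (↑(u ∪ f) : Set (Submodule R R))) : ℂ))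
    (by
      intro e he
      rw [Finset.mem_filter, Finset.mem_powerset] at he
      exact Finset.mem_powerset.mpr (Finset.sdiff_subset_sdiff he.1 le_rfl))
    (by
      intro f hf
      rw [Finset.mem_powerset] at hf
      rw [Finset.mem_filter, Finset.mem_powerset]
      exact ⟨Finset.union_subset huT (hf.trans (Finset.sdiff_subset)), Finset.subset_union_left⟩)
    (by
      intro e he
      rw [Finset.mem_filter] at he
      exact Finset.union_sdiff_of_subset he.2)
    (by
      intro f hf
      rw [Finset.mem_powerset] at hf
      have hd : Disjoint u f := Finset.disjoint_of_subset_right hf Finset.disjoint_sdiff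
      exact Finset.union_sdiff_cancel_left hd)
    (by
      intro e he
      rw [Finset.mem_filter] at he
      rw [Finset.union_sdiff_of_subset he.2])]
  have hterm : ∀ f ∈ (tT \ u).powerset,
      (-1:ℂ) ^ (u ∪ f).card
        * (Nat.card (interIn J (↑(u ∪ f) : Set (Submodule R R))) : ℂ)
      = ((-1:ℂ) ^ u.card * (Nat.card J : ℂ)
          * ∏ M ∈ u, ((Nat.card M : ℂ) / (Nat.card J : ℂ)))
        * ∏ M ∈ f, (-((Nat.card M : ℂ) / (Nat.card J : ℂ))) := by
    intro f hf
    rw [Finset.mem_powerset] at hf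
    have hd : Disjoint u f := Finset.disjoint_of_subset_right hf Finset.disjoint_sdiff
    have hsub : ∀ M ∈ u ∪ f, M ∈ maxROf J := by
      intro M hM
      rcases Finset.mem_union.mp hM with h | h
      · exact hmem M (huT h)
      · exact hmem M ((Finset.sdiff_subset) (hf h))
    rw [myCard_interIn hmin _ hsub, Finset.card_union_of_disjoint hd, Finset.prod_union hd]
    have hneg : ∏ M ∈ f, (-((Nat.card M : ℂ) / (Nat.card J : ℂ)))
        = ∏ M ∈ f, ((-1 : ℂ) * ((Nat.card M : ℂ) / (Nat.card J : ℂ))) :=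
      Finset.prod_congr rfl (fun M _ => by ring)
    rw [hneg, Finset.prod_mul_distrib, Finset.prod_const, pow_add]
    ring
  rw [Finset.sum_congr rfl hterm, ← Finset.mul_sum]
  have hps := Finset.prod_add (fun M : Submodule R R => -((Nat.card M : ℂ) / (Nat.card J : ℂ)))
    (fun _ => (1:ℂ)) (tT \ u)
  simp only [one_pow, mul_one, Finset.prod_const_one] at hps
  have h1 : ∀ M ∈ tT \ u, -((Nat.card M : ℂ) / (Nat.card J : ℂ)) + 1
      = 1 - ((Nat.card M : ℂ) / (Nat.card J : ℂ)) := fun M _ => by ring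
  rw [Finset.prod_congr rfl h1] at hps
  rw [← hps]

end MyAux4

section MyAux5

variable [Ring R] [Fintype R]

theorem myKey {J : Submodule R R}
    (hmin : ∀ E : Set (Submodule R R), E ⊂ maxROf J →
      interIn J E ≠ interIn J (maxROf J))
    {K : Submodule R R} (hIK : interIn J (maxROf J) ≤ K) (hKJ : K ≤ J) :
    interIn J (maxROfAbove J K) = K := by
  classical
  set D : Set (Submodule R R) := {M | M ∈ maxROf J ∧ ¬ K ≤ M} with hD
  have hstep : ∀ d : Finset (Submodule R R), (↑d : Set (Submodule R R)) ⊆ D →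
      K ⊔ interIn J (↑d : Set (Submodule R R)) = J := by
    intro d
    induction d using Finset.induction_on with
    | empty => intro _; rw [Finset.coe_empty, myInterIn_empty]; exact sup_eq_right.mpr hKJ
    | @insert M d hMd ih =>
      intro hsub
      rw [Finset.coe_insert] at hsub ⊢
      have hMD : M ∈ D := hsub (Set.mem_insert M _)
      have hdD : (↑d : Set (Submodule R R)) ⊆ D := fun M' h => hsub (Set.mem_insert_of_mem _ h)
      have hdT : (↑d : Set (Submodule R R)) ⊆ maxROf J := fun M' h => (hdD h).1
      have hdle : ∀ M' ∈ (↑d : Set (Submodule R R)), M' ≤ J := fun M' h => ((hdD h).1).1.le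
      have hMT : M ∈ maxROf J := hMD.1
      set A := interIn J (↑d : Set (Submodule R R)) with hA
      have hAJ : K ⊔ A = J := ih hdD
      have hAle : A ≤ J := myInterIn_le hdle
      have claim1 : ¬ (K ⊓ A ≤ M) := by
        intro h
        set C' := K ⊔ (A ⊓ M) with hC'
        have hACint : A ⊓ C' = A ⊓ M := by
          have hmod : ((A ⊓ M) ⊔ K) ⊓ A = (A ⊓ M) ⊔ (K ⊓ A) :=
            sup_inf_assoc_of_le K (inf_le_left : A ⊓ M ≤ A)
          calc A ⊓ C' = ((A ⊓ M) ⊔ K) ⊓ A := by rw [hC', sup_comm, inf_comm]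
            _ = (A ⊓ M) ⊔ (K ⊓ A) := hmod
            _ = A ⊓ M := sup_eq_left.mpr (le_inf inf_le_right h)
        have hC'J : C' ≠ J := by
          intro hEq
          have h5 : A ⊓ M = A := by
            rw [← hACint, hEq]
            exact inf_eq_left.mpr hAle
          have hAM : A ≤ M := by rw [← h5]; exact inf_le_right
          have hMmem : M ∈ (↑d : Set (Submodule R R)) :=
            myMem_of_interIn_le hmin hdT hMT hAM
          exact hMd (by exact_mod_cast hMmem)
        have hC'le : C' ≤ J := sup_le hKJ (inf_le_left.trans hAle)
        obtain ⟨M'', hM''T, hC'M''⟩ := myExists_max (hC'le.lt_of_ne hC'J)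
        have hKM'' : K ≤ M'' := le_sup_left.trans hC'M''
        have hAMM'' : interIn J (insert M (↑d : Set (Submodule R R))) ≤ M'' := by
          rw [myInterIn_insert hMT.1.le hdle]
          exact (le_sup_right.trans hC'M'' : A ⊓ M ≤ M'')
        have hmem : M'' ∈ insert M (↑d : Set (Submodule R R)) :=
          myMem_of_interIn_le hmin (Set.insert_subset hMT hdT) hM''T hAMM''
        have hM''D : M'' ∈ D := (Set.insert_subset_iff.mpr ⟨hMD, hdD⟩) hmem
        exact hM''D.2 hKM''
      have hsup : A ⊔ M = J := myInterIn_sup hmin hdT hMT (by exact_mod_cast hMd)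
      have claim2 : A ⊓ M ⋖ A := by
        have hMJ : M ⋖ J := myMaxROf_covBy hMT
        rw [← hsup] at hMJ
        exact inf_covBy_of_covBy_sup_right hMJ
      have claim3 : (K ⊓ A) ⊔ (A ⊓ M) = A := by
        rcases claim2.eq_or_eq (c := (K ⊓ A) ⊔ (A ⊓ M)) le_sup_right
          (sup_le inf_le_right inf_le_left) with h | h
        · exact absurd ((le_sup_left.trans h.le).trans inf_le_right) claim1
        · exact h
      rw [myInterIn_insert hMT.1.le hdle]
      refine le_antisymm (sup_le hKJ (inf_le_left.trans hAle)) ?_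
      have hAle2 : A ≤ K ⊔ (A ⊓ M) :=
        le_trans (le_of_eq claim3.symm) (sup_le_sup_right (inf_le_left : K ⊓ A ≤ K) _)
      calc J = K ⊔ A := hAJ.symm
        _ ≤ K ⊔ (K ⊔ (A ⊓ M)) := sup_le le_sup_left (hAle2.trans le_sup_right)
        _ = K ⊔ (A ⊓ M) := by rw [← sup_assoc, sup_idem]
  have hstepD : K ⊔ interIn J D = J := by
    have h := hstep (Set.toFinite D).toFinset (by rw [Set.Finite.coe_toFinset])
    rwa [Set.Finite.coe_toFinset] at h
  have hKN : K ≤ interIn J (maxROfAbove J K) := myLe_interIn hKJ (fun M hM => hM.2)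
  have hND : interIn J (maxROfAbove J K) ⊓ interIn J D ≤ K := by
    have hunion : maxROfAbove J K ∪ D = maxROf J := by
      ext M
      constructor
      · rintro (h | h); exacts [h.1, h.1]
      · intro h
        by_cases hKM : K ≤ M
        · exact Or.inl ⟨h, hKM⟩
        · exact Or.inr ⟨h, hKM⟩
    calc interIn J (maxROfAbove J K) ⊓ interIn J D = interIn J (maxROfAbove J K ∪ D) :=
        (myInterIn_union (fun M hM => hM.1.1.le) (fun M hM => hM.1.1.le)).symm
      _ = interIn J (maxROf J) := by rw [hunion]
      _ ≤ K := hIK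
  refine le_antisymm ?_ hKN
  have hNJ : interIn J (maxROfAbove J K) ≤ J := myInterIn_le (fun M hM => hM.1.1.le)
  have hmod : (K ⊔ interIn J D) ⊓ interIn J (maxROfAbove J K)
      = K ⊔ (interIn J D ⊓ interIn J (maxROfAbove J K)) :=
    sup_inf_assoc_of_le _ hKN
  rw [hstepD, inf_eq_right.mpr hNJ] at hmod
  rw [hmod]
  exact sup_le le_rfl (inf_comm (interIn J D) _ ▸ hND)

theorem myMu_eq {J K : Submodule R R}
    (hmin : ∀ E : Set (Submodule R R), E ⊂ maxROf J →
      interIn J E ≠ interIn J (maxROf J))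
    (hKJ : K < J) (hinter : interIn J (maxROfAbove J K) = K) :
    (muR K J : ℂ) = (-1 : ℂ) ^ (maxROfAbove J K).toFinite.toFinset.card := by
  classical
  have hTKsub : maxROfAbove J K ⊆ maxROf J := fun M hM => hM.1
  have hTKne : (maxROfAbove J K).Nonempty := by
    rcases Set.eq_empty_or_nonempty (maxROfAbove J K) with h | h
    · exfalso
      rw [h, myInterIn_empty] at hinter
      exact hKJ.ne' hinter
    · exact h
  have hcond : K < J ∧ ∃ E : Set (Submodule R R),
      E ⊆ maxROf J ∧ E.Nonempty ∧ interIn J E = K :=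
    ⟨hKJ, maxROfAbove J K, hTKsub, hTKne, hinter⟩
  have huniq : ∀ E : Set (Submodule R R), E ⊆ maxROf J → interIn J E = K →
      E = maxROfAbove J K := by
    intro E hE hEK
    have h1 : interIn J E ≤ interIn J (maxROfAbove J K) := by rw [hEK, hinter]
    have h2 : interIn J (maxROfAbove J K) ≤ interIn J E := by rw [hEK, hinter]
    exact Set.Subset.antisymm ((myInterIn_le_iff hmin hTKsub hE).mp h2)
      ((myInterIn_le_iff hmin hE hTKsub).mp h1)
  have hcardTK : Nat.card (maxROfAbove J K) = (maxROfAbove J K).toFinite.toFinset.card := by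
    rw [Nat.card_coe_set_eq, Set.ncard_eq_toFinset_card _ (Set.toFinite _)]
  have hmu : muR K J =
      ((Nat.card {E : Set (Submodule R R) //
        E ⊆ maxROf J ∧ interIn J E = K ∧ Even (Nat.card E)} : ℤ)
      - (Nat.card {E : Set (Submodule R R) //
        E ⊆ maxROf J ∧ interIn J E = K ∧ Odd (Nat.card E)} : ℤ)) := by
    rw [muR, if_neg hKJ.ne, if_pos hcond]
  by_cases hpar : Even ((maxROfAbove J K).toFinite.toFinset.card)
  · haveI hu : Unique {E : Set (Submodule R R) //
        E ⊆ maxROf J ∧ interIn J E = K ∧ Even (Nat.card E)} := by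
      refine ⟨⟨⟨maxROfAbove J K, hTKsub, hinter, by rw [hcardTK]; exact hpar⟩⟩, ?_⟩
      intro E
      exact Subtype.ext (huniq E.1 E.2.1 E.2.2.1)
    haveI he : IsEmpty {E : Set (Submodule R R) //
        E ⊆ maxROf J ∧ interIn J E = K ∧ Odd (Nat.card E)} := by
      refine ⟨fun E => ?_⟩
      have h1 := huniq E.1 E.2.1 E.2.2.1
      have h2 := E.2.2.2
      rw [h1, hcardTK] at h2
      exact (Nat.not_even_iff_odd.mpr h2) hpar
    rw [hmu]
    rw [Nat.card_unique, Nat.card_of_isEmpty]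
    rw [hpar.neg_one_pow]
    norm_num
  · haveI hu : Unique {E : Set (Submodule R R) //
        E ⊆ maxROf J ∧ interIn J E = K ∧ Odd (Nat.card E)} := by
      refine ⟨⟨⟨maxROfAbove J K, hTKsub, hinter, by
        rw [hcardTK]; exact Nat.not_even_iff_odd.mp hpar⟩⟩, ?_⟩
      intro E
      exact Subtype.ext (huniq E.1 E.2.1 E.2.2.1)
    haveI he : IsEmpty {E : Set (Submodule R R) //
        E ⊆ maxROf J ∧ interIn J E = K ∧ Even (Nat.card E)} := by
      refine ⟨fun E => ?_⟩
      have h1 := huniq E.1 E.2.1 E.2.2.1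
      have h2 := E.2.2.2
      rw [h1, hcardTK] at h2
      exact (Nat.not_even_iff_odd.mpr (Nat.not_even_iff_odd.mp hpar)) h2
    rw [hmu, Nat.card_of_isEmpty, Nat.card_unique,
      (Nat.not_even_iff_odd.mp hpar).neg_one_pow]
    norm_num

theorem myPhi_eq {J K : Submodule R R} (hKJ : K < J)
    (hcond : K < J ∧ ∃ E : Set (Submodule R R),
      E ⊆ maxROf J ∧ E.Nonempty ∧ interIn J E = K) :
    phiR K J = ∏ M ∈ (maxROfAbove J K).toFinite.toFinset,
      ((Nat.card J : ℂ) / (Nat.card M : ℂ) - 1) := by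
  rw [phiR, if_neg hKJ.ne, if_pos hcond,
    ← Set.Finite.coe_toFinset (Set.toFinite (maxROfAbove J K)), finprod_mem_coe_finset]
  apply Finset.prod_congr _ (fun _ _ => rfl)
  ext M
  simp [Set.Finite.mem_toFinset]

end MyAux5


theorem stmt1 [Ring R] [Fintype R] (χ : AddChar R ℂ) (x : R) (K : Submodule R R)
    (hK : (K : Set R) ⊆ (lgen x : Set R) ∩ {y | χ y = 1})
    (hKmax : ∀ L : Submodule R R,
      (L : Set R) ⊆ (lgen x : Set R) ∩ {y | χ y = 1} → L ≤ K)
    (hmin : ∀ E : Set (Submodule R R), E ⊂ maxROf (lgen x) →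
      interIn (lgen x) E ≠ interIn (lgen x) (maxROf (lgen x))) :
    phiR K (lgen x) * CchiL χ x = (muR K (lgen x) : ℂ) * (Nat.card (classL x) : ℂ) ∧
    CchiL χ x = (muR K (lgen x) : ℂ) * (Nat.card (classL x) : ℂ) / phiR K (lgen x) := by
  classical
  have hC : CchiL χ x = ∑ s ∈ (classL x).toFinite.toFinset, χ s := by
    rw [CchiL, ← Set.Finite.coe_toFinset (Set.toFinite (classL x)), finsum_mem_coe_finset]
    apply Finset.sum_congr _ (fun _ _ => rfl)
    ext s
    simp [Set.Finite.mem_toFinset]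
  have hcardN : Nat.card (classL x) = (classL x).toFinite.toFinset.card := by
    rw [Nat.card_coe_set_eq, Set.ncard_eq_toFinset_card _ (Set.toFinite _)]
  have hKJ : K ≤ lgen x := fun y hy => (hK hy).1
  have hT : ∀ M ∈ maxROf (lgen x), M ≤ lgen x := fun M hM => hM.1.le
  have htriv : ∀ L : Submodule R R, L ≤ lgen x →
      (((L : Set R) ⊆ {y | χ y = 1}) ↔ L ≤ K) := by
    intro L hL
    constructor
    · intro h
      exact hKmax L (Set.subset_inter (fun y hy => hL hy) h)
    · intro h y hy
      exact (hK (h hy)).2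
  by_cases hIK : interIn (lgen x) (maxROf (lgen x)) ≤ K
  · -- I₀ ≤ K : K is an intersection of maximal ideals
    have hinter : interIn (lgen x) (maxROfAbove (lgen x) K) = K := myKey hmin hIK hKJ
    by_cases hKJeq : K = lgen x
    · -- K = J
      have hμ : muR K (lgen x) = 1 := by rw [muR, if_pos hKJeq]
      have hφ : phiR K (lgen x) = 1 := by rw [phiR, if_pos hKJeq]
      have hCval : CchiL χ x = (Nat.card (classL x) : ℂ) := by
        rw [hC]
        have h1 : ∀ s ∈ (classL x).toFinite.toFinset, χ s = 1 := by
          intro s hs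
          rw [Set.Finite.mem_toFinset] at hs
          have hsJ : s ∈ lgen x := (myMem_classL.mp hs).1
          exact ((htriv (lgen x) le_rfl).mpr hKJeq.ge) hsJ
        rw [Finset.sum_congr rfl h1, Finset.sum_const, nsmul_eq_mul, mul_one, hcardN]
      refine ⟨?_, ?_⟩
      · rw [hμ, hφ, hCval]; push_cast; ring
      · rw [hμ, hφ, hCval]; push_cast; simp
    · -- K < J
      have hKJlt : K < lgen x := hKJ.lt_of_ne hKJeq
      have htKsub : (maxROfAbove (lgen x) K).toFinite.toFinset
          ⊆ (maxROf (lgen x)).toFinite.toFinset := by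
        intro M hM
        rw [Set.Finite.mem_toFinset] at hM ⊢
        exact hM.1
      have hTKne : (maxROfAbove (lgen x) K).Nonempty := by
        rcases Set.eq_empty_or_nonempty (maxROfAbove (lgen x) K) with h | h
        · exfalso
          rw [h, myInterIn_empty] at hinter
          exact hKJlt.ne' hinter
        · exact h
      -- character sum computation
      have hCe : CchiL χ x
          = ∑ e ∈ (maxROf (lgen x)).toFinite.toFinset.powerset,
            (if (maxROfAbove (lgen x) K).toFinite.toFinset ⊆ e then
              (-1:ℂ)^e.card
                * (Nat.card (interIn (lgen x) (↑e : Set (Submodule R R))) : ℂ) else 0) := by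
        rw [hC, ← myIE x (χ : R → ℂ)]
        refine Finset.sum_congr rfl (fun e he => ?_)
        have hesub : (↑e : Set (Submodule R R)) ⊆ maxROf (lgen x) := fun M hM =>
          (Set.Finite.mem_toFinset _).mp (Finset.mem_powerset.mp he hM)
        have hIe_le : interIn (lgen x) (↑e : Set (Submodule R R)) ≤ lgen x :=
          myInterIn_le (fun M hM => (hesub hM).1.le)
        rw [mySum_submodule χ (interIn (lgen x) (↑e : Set (Submodule R R)))]
        have hcondiff : ((interIn (lgen x) (↑e : Set (Submodule R R)) : Set R)
            ⊆ {y | χ y = 1}) ↔ (maxROfAbove (lgen x) K).toFinite.toFinset ⊆ e := by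
          rw [htriv _ hIe_le]
          constructor
          · intro h M hM
            rw [Set.Finite.mem_toFinset] at hM
            have h2 : interIn (lgen x) (↑e : Set (Submodule R R))
                ≤ interIn (lgen x) (maxROfAbove (lgen x) K) := by rw [hinter]; exact h
            have hsub2 := (myInterIn_le_iff hmin hesub (fun M' hM' => hM'.1)).mp h2
            exact Finset.mem_coe.mp (hsub2 hM)
          · intro h
            rw [← hinter]
            apply myInterIn_anti (fun M hM => (hesub hM).1.le)
            intro M hM
            exact Finset.mem_coe.mpr (h ((Set.Finite.mem_toFinset _).mpr hM))
        rw [if_congr hcondiff rfl rfl, mul_ite, mul_zero]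
      rw [mySumform hmin _ htKsub] at hCe
      -- cardinality of the class
      have hcount : ((Nat.card (classL x)) : ℂ)
          = (Nat.card (lgen x) : ℂ) * ∏ M ∈ (maxROf (lgen x)).toFinite.toFinset,
              (1 - ((Nat.card M : ℂ) / (Nat.card (lgen x) : ℂ))) := by
        have h0 := myIE x (fun _ => (1:ℂ))
        have h1 : ∀ e ∈ (maxROf (lgen x)).toFinite.toFinset.powerset,
            (-1:ℂ)^e.card * ∑ _s ∈ (interIn (lgen x) (↑e : Set (Submodule R R)) :
                Set R).toFinite.toFinset, (1:ℂ)
            = (if (∅ : Finset (Submodule R R)) ⊆ e then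
                (-1:ℂ)^e.card
                  * (Nat.card (interIn (lgen x) (↑e : Set (Submodule R R))) : ℂ) else 0) := by
          intro e he
          rw [if_pos (Finset.empty_subset e), Finset.sum_const, nsmul_eq_mul, mul_one]
          rw [myCard_submodule]
        rw [Finset.sum_congr rfl h1, mySumform hmin ∅ (Finset.empty_subset _)] at h0
        have h2 : ∑ _s ∈ (classL x).toFinite.toFinset, (1:ℂ)
            = ((Nat.card (classL x)) : ℂ) := by
          rw [Finset.sum_const, nsmul_eq_mul, mul_one, hcardN]
        rw [h2] at h0
        rw [← h0]
        simp
      -- μ and φ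
      have hμ : (muR K (lgen x) : ℂ)
          = (-1:ℂ) ^ (maxROfAbove (lgen x) K).toFinite.toFinset.card :=
        myMu_eq hmin hKJlt hinter
      have hφ : phiR K (lgen x) = ∏ M ∈ (maxROfAbove (lgen x) K).toFinite.toFinset,
          ((Nat.card (lgen x) : ℂ) / (Nat.card M : ℂ) - 1) :=
        myPhi_eq hKJlt ⟨hKJlt, maxROfAbove (lgen x) K, fun M hM => hM.1, hTKne, hinter⟩
      have hfacne : ∀ M ∈ (maxROfAbove (lgen x) K).toFinite.toFinset,
          ((Nat.card (lgen x) : ℂ) / (Nat.card M : ℂ) - 1) ≠ 0 := by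
        intro M hM
        rw [Set.Finite.mem_toFinset] at hM
        have hlt : Nat.card M < Nat.card (lgen x) := by
          rw [← SetLike.coe_sort_coe, ← SetLike.coe_sort_coe,
            Nat.card_coe_set_eq, Nat.card_coe_set_eq]
          exact Set.ncard_lt_ncard (SetLike.coe_ssubset_coe.mpr hM.1.1) (Set.toFinite _)
        intro h0
        have h1 : (Nat.card (lgen x) : ℂ) / (Nat.card M : ℂ) = 1 := by
          have := sub_eq_zero.mp h0
          exact this
        have h2 : (Nat.card (lgen x) : ℂ) = (Nat.card M : ℂ) :=
          (div_eq_one_iff_eq (myCardJ_ne_zero M)).mp h1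
        have h3 : Nat.card (lgen x) = Nat.card M := by exact_mod_cast h2
        omega
      have hφ0 : phiR K (lgen x) ≠ 0 := by
        rw [hφ]
        exact Finset.prod_ne_zero_iff.mpr hfacne
      have hcomb : (∏ M ∈ (maxROfAbove (lgen x) K).toFinite.toFinset,
            ((Nat.card (lgen x) : ℂ) / (Nat.card M : ℂ) - 1))
          * (∏ M ∈ (maxROfAbove (lgen x) K).toFinite.toFinset,
            ((Nat.card M : ℂ) / (Nat.card (lgen x) : ℂ)))
          = ∏ M ∈ (maxROfAbove (lgen x) K).toFinite.toFinset,
            (1 - ((Nat.card M : ℂ) / (Nat.card (lgen x) : ℂ))) := by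
        rw [← Finset.prod_mul_distrib]
        refine Finset.prod_congr rfl (fun M hM => ?_)
        have hM0 : (Nat.card M : ℂ) ≠ 0 := myCardJ_ne_zero M
        have hJ0 : (Nat.card (lgen x) : ℂ) ≠ 0 := myCardJ_ne_zero (lgen x)
        field_simp
      have goal1 : phiR K (lgen x) * CchiL χ x
          = (muR K (lgen x) : ℂ) * (Nat.card (classL x) : ℂ) := by
        rw [hφ, hCe, hμ, hcount, ← Finset.prod_sdiff htKsub]
        linear_combination ((-1:ℂ) ^ (maxROfAbove (lgen x) K).toFinite.toFinset.card
          * (Nat.card (lgen x) : ℂ)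
          * ∏ M ∈ (maxROf (lgen x)).toFinite.toFinset \
              (maxROfAbove (lgen x) K).toFinite.toFinset,
            (1 - ((Nat.card M : ℂ) / (Nat.card (lgen x) : ℂ)))) * hcomb
      refine ⟨goal1, ?_⟩
      rw [eq_div_iff hφ0]
      linear_combination goal1
  · -- I₀ ⊄ K : both sides vanish
    have hI0 : ¬ ((interIn (lgen x) (maxROf (lgen x)) : Set R) ⊆ {y | χ y = 1}) := by
      intro h
      exact hIK ((htriv _ (myInterIn_le hT)).mp h)
    obtain ⟨t0, ht0mem, ht0⟩ : ∃ t0 ∈ (interIn (lgen x) (maxROf (lgen x)) : Set R), χ t0 ≠ 1 := by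
      by_contra hc
      push_neg at hc
      exact hI0 (fun y hy => hc y hy)
    have hCz : CchiL χ x = 0 := by
      rw [hC]
      refine mySum_shift χ (fun s hs => ?_) ht0
      rw [Set.Finite.mem_toFinset] at hs ⊢
      rw [myMem_classL] at hs ⊢
      obtain ⟨hsJ, hsM⟩ := hs
      refine ⟨(lgen x).add_mem hsJ (myInterIn_le hT ht0mem), ?_⟩
      intro M hM hmem
      have ht0M : t0 ∈ M := myInterIn_le_of_mem hM ht0mem
      have hsM' : s ∈ M := by
        have h5 := M.sub_mem hmem ht0M
        simpa using h5
      exact hsM M hM hsM'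
    have hμz : muR K (lgen x) = 0 := by
      rw [muR, if_neg ?hne, if_neg ?h2]
      case hne =>
        intro h
        exact hIK ((myInterIn_le hT).trans h.ge)
      case h2 =>
        rintro ⟨-, E, hET, hEne, hEK⟩
        apply hIK
        rw [← hEK]
        exact myInterIn_anti hT hET
    rw [hCz, hμz]
    norm_num
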